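/- If the dual ball of a Banach space Y is fragmentable by some metric in the weak* topology, then Y is a weak Asplund space, i.e., every continuous convex function on Y is Gâteaux differentiable at each point of a dense G_delta subset of Y. -/

import Mathlib

/-- `ρ` is a metric on the subtype of `B`. -/
def IsMetricOn {X : Type*} (B : Set X) (ρ : X → X → ℝ) : Prop :=
  (∀ x ∈ B, ∀ y ∈ B, 0 ≤ ρ x y) ∧
  (∀ x ∈ B, ∀ y ∈ B, (ρ x y = 0 ↔ x = y)) ∧
  (∀ x ∈ B, ∀ y ∈ B, ρ x y = ρ y x) ∧
  (∀ x ∈ B, ∀ y ∈ B, ∀ z ∈ B, ρ x z ≤ ρ x y + ρ y z)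

/-- A set `B` in a topological space is fragmented by `ρ`: every nonempty subset `A`
of `B` has a relatively open nonempty piece of arbitrarily small `ρ`-diameter. -/
def FragmentedBy {X : Type*} [TopologicalSpace X] (B : Set X) (ρ : X → X → ℝ) : Prop :=
  ∀ ε > (0 : ℝ), ∀ A ⊆ B, A.Nonempty →
    ∃ U : Set X, IsOpen U ∧ (U ∩ A).Nonempty ∧
      ∀ x ∈ U ∩ A, ∀ y ∈ U ∩ A, ρ x y < ε


open Set Filter Topology Metric

variable {Y : Type} [NormedAddCommGroup Y] [NormedSpace ℝ Y]

/-- subdifferential, valued in the weak dual -/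
def WAS.Subdiff (f : Y → ℝ) (x : Y) : Set (WeakDual ℝ Y) :=
  {φ | ∀ y, f x + φ (y - x) ≤ f y}

namespace WAS

theorem subdiff_nonempty {f : Y → ℝ} (hf : Continuous f) (hc : ConvexOn ℝ Set.univ f) (x : Y) :
    (Subdiff f x).Nonempty := by
  set s : Set (Y × ℝ) := {p | f p.1 < p.2} with hs
  have hsopen : IsOpen s := isOpen_lt (hf.comp continuous_fst) continuous_snd
  have hsconv : Convex ℝ s := by
    rintro ⟨p1, p2⟩ hp ⟨q1, q2⟩ hq a b ha hb hab
    simp only [hs, mem_setOf_eq] at hp hq ⊢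
    have h1 : f (a • p1 + b • q1) ≤ a * f p1 + b * f q1 := by
      simpa using hc.2 (mem_univ p1) (mem_univ q1) ha hb hab
    rcases eq_or_lt_of_le ha with ha0 | ha0
    · have hb1 : b = 1 := by linarith
      simp only [Prod.smul_mk, Prod.mk_add_mk, smul_eq_mul]
      nlinarith
    · simp only [Prod.smul_mk, Prod.mk_add_mk, smul_eq_mul]
      nlinarith
  have hx0 : ((x, f x) : Y × ℝ) ∉ s := by simp [hs]
  obtain ⟨F, hF⟩ := geometric_hahn_banach_open_point hsconv hsopen hx0
  set c : ℝ := F (0, 1) with hcdef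
  have hlt : ∀ y : Y, ∀ t : ℝ, f y < t → F (y, t) < F (x, f x) := fun y t ht => hF _ ht
  have hc : c < 0 := by
    have h1 : F (x, f x + 1) < F (x, f x) := hlt x (f x + 1) (by linarith)
    have h2 : F (x, f x + 1) = F (x, f x) + c := by
      rw [hcdef, ← map_add]
      norm_num
    linarith
  have key : ∀ y : Y, F (y, f y) ≤ F (x, f x) := by
    intro y
    by_contra h
    push_neg at h
    set ε : ℝ := (F (y, f y) - F (x, f x)) / (-c) / 2 with hε
    have hεpos : 0 < ε := by
      apply div_pos (div_pos (by linarith) (by linarith)) (by norm_num)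
    have h1 : F (y, f y + ε) < F (x, f x) := hlt y _ (by linarith)
    have h2 : F (y, f y + ε) = F (y, f y) + ε * c := by
      have : ((y, f y + ε) : Y × ℝ) = (y, f y) + ε • (0, 1) := by
        simp [Prod.ext_iff]
      rw [this, map_add, map_smul, smul_eq_mul, hcdef]
    have hcne : c ≠ 0 := ne_of_lt hc
    have h3 : ε * c = -(F (y, f y) - F (x, f x)) / 2 := by
      rw [hε]
      field_simp
    rw [h2, h3] at h1
    linarith
  -- define the subgradient
  set g : Y →L[ℝ] ℝ := F.comp (ContinuousLinearMap.inl ℝ Y ℝ) with hg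
  have hdecomp : ∀ y : Y, ∀ t : ℝ, F (y, t) = g y + t * c := by
    intro y t
    have : ((y, t) : Y × ℝ) = (y, 0) + t • (0, 1) := by simp [Prod.ext_iff]
    rw [this, map_add, map_smul, smul_eq_mul, hg]
    simp [ContinuousLinearMap.inl_apply]
    exact Or.inl hcdef.symm
  set ψ : Y →L[ℝ] ℝ := (-c)⁻¹ • g with hψ
  refine ⟨StrongDual.toWeakDual ψ, fun y => ?_⟩
  have h1 : g y + c * f y ≤ g x + c * f x := by
    have := key y
    rw [hdecomp y (f y), hdecomp x (f x)] at this
    linarith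
  have h2 : (StrongDual.toWeakDual ψ) (y - x) = (-c)⁻¹ * (g y) - (-c)⁻¹ * (g x) := by
    have h1 : (StrongDual.toWeakDual ψ) (y - x) = ψ (y - x) := rfl
    rw [h1, hψ, ContinuousLinearMap.smul_apply, map_sub, smul_eq_mul, mul_sub]
  rw [h2]
  have hcne : (0:ℝ) < -c := by linarith
  have h4 : (g y - g x) / (-c) ≤ f y - f x := by
    rw [div_le_iff₀ hcne]
    nlinarith
  have h5 : (-c)⁻¹ * g y - (-c)⁻¹ * g x = (g y - g x) / (-c) := by ring
  linarith

/-- the `r`-ball of the dual, inside the weak dual -/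
def K (r : ℝ) : Set (WeakDual ℝ Y) := {φ | ∀ y, |φ y| ≤ r * ‖y‖}

theorem subdiff_localbound {f : Y → ℝ} (hf : Continuous f) (x : Y) :
    ∃ δ > (0:ℝ), ∃ r > (0:ℝ), ∀ z ∈ ball x δ, Subdiff f z ⊆ K r := by
  obtain ⟨δ₂, hδ₂, hδ₂'⟩ := Metric.continuousAt_iff.mp (hf.continuousAt (x := x)) 1 one_pos
  refine ⟨δ₂ / 2, by linarith, 8 / δ₂, by positivity, fun z hz φ hφ y => ?_⟩
  rw [mem_ball] at hz
  have hball : ∀ w : Y, dist w x < δ₂ → |f w - f x| < 1 := by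
    intro w hw
    simpa [Real.dist_eq] using hδ₂' hw
  have hsmall : ∀ v : Y, ‖v‖ ≤ δ₂ / 4 → φ v ≤ 2 := by
    intro v hv
    have h1 : f z + φ ((z + v) - z) ≤ f (z + v) := hφ (z + v)
    have h2 : (z + v) - z = v := by abel
    rw [h2] at h1
    have h3 : dist (z + v) x < δ₂ := by
      have hd : dist (z + v) z = ‖v‖ := by simp [dist_eq_norm]
      calc dist (z + v) x ≤ dist (z + v) z + dist z x := dist_triangle _ _ _
        _ < δ₂ := by rw [hd]; linarith
    have h4 : dist z x < δ₂ := by linarith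
    have h5 := hball _ h3
    have h6 := hball _ h4
    rw [abs_lt] at h5 h6
    linarith
  rcases eq_or_ne y 0 with rfl | hy
  · simp
  · have hny : (0:ℝ) < ‖y‖ := norm_pos_iff.mpr hy
    set v : Y := (δ₂ / (4 * ‖y‖)) • y with hv
    have hnv : ‖v‖ ≤ δ₂ / 4 := by
      rw [hv, norm_smul, Real.norm_eq_abs, abs_of_pos (by positivity)]
      rw [div_mul_eq_mul_div, div_le_div_iff₀ (by positivity) (by norm_num : (0:ℝ) < 4)]
      exact le_of_eq (by ring)
    have h7 : φ v ≤ 2 := hsmall v hnv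
    have h8 : φ (-v) ≤ 2 := hsmall (-v) (by rwa [norm_neg])
    have h9 : |φ v| ≤ 2 := by
      rw [abs_le]
      refine ⟨?_, h7⟩
      rw [map_neg] at h8
      linarith
    have hφv : φ v = (δ₂ / (4 * ‖y‖)) * φ y := by rw [hv, map_smul, smul_eq_mul]
    rw [hφv, abs_mul, abs_of_pos (show (0:ℝ) < δ₂ / (4 * ‖y‖) by positivity)] at h9
    rw [div_mul_eq_mul_div, div_le_iff₀ (by positivity : (0:ℝ) < 4 * ‖y‖)] at h9
    rw [div_mul_eq_mul_div, le_div_iff₀ hδ₂]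
    nlinarith

theorem subdiff_closed (f : Y → ℝ) (x : Y) : IsClosed (Subdiff f x) := by
  have : Subdiff f x = ⋂ y : Y, {φ : WeakDual ℝ Y | f x + φ (y - x) ≤ f y} := by
    ext φ; simp [Subdiff, mem_iInter]
  rw [this]
  refine isClosed_iInter fun y => ?_
  exact isClosed_le (by exact (continuous_const.add (WeakDual.eval_continuous (y - x)))) continuous_const

theorem K_compact {r : ℝ} (hr : 0 ≤ r) : IsCompact (K (Y := Y) r) := by
  have : K (Y := Y) r = WeakDual.toStrongDual ⁻¹' Metric.closedBall 0 r := by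
    ext φ
    simp only [K, mem_setOf_eq, mem_preimage, Metric.mem_closedBall, dist_zero_right]
    constructor
    · intro h
      refine ContinuousLinearMap.opNorm_le_bound _ hr fun y => ?_
      simpa [Real.norm_eq_abs] using h y
    · intro h y
      have := ContinuousLinearMap.le_opNorm (WeakDual.toStrongDual φ) y
      rw [Real.norm_eq_abs] at this
      calc |φ y| ≤ ‖WeakDual.toStrongDual φ‖ * ‖y‖ := this
        _ ≤ r * ‖y‖ := by nlinarith [norm_nonneg y]
  rw [this]
  exact WeakDual.isCompact_closedBall (0 : StrongDual ℝ Y) r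

theorem K_closed {r : ℝ} (hr : 0 ≤ r) : IsClosed (K (Y := Y) r) := (K_compact hr).isClosed

theorem subdiff_usc {f : Y → ℝ} (hf : Continuous f) (x : Y) {W : Set (WeakDual ℝ Y)}
    (hW : IsOpen W) (hsub : Subdiff f x ⊆ W) : ∀ᶠ z in 𝓝 x, Subdiff f z ⊆ W := by
  by_contra h
  rw [Filter.not_eventually] at h
  set N : Set Y := {z | ¬ Subdiff f z ⊆ W} with hN
  have hNB : (𝓝[N] x).NeBot :=
    mem_closure_iff_nhdsWithin_neBot.mp (mem_closure_iff_frequently.mpr h)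
  obtain ⟨δ, hδ, r, hr, hbd⟩ := subdiff_localbound hf x
  -- choice of a bad subgradient
  have hchoice : ∀ z : Y, ∃ φ : WeakDual ℝ Y, z ∈ N → (φ ∈ Subdiff f z ∧ φ ∉ W) := by
    intro z
    by_cases hz : z ∈ N
    · rw [hN, mem_setOf_eq, Set.not_subset] at hz
      obtain ⟨φ, h1, h2⟩ := hz
      exact ⟨φ, fun _ => ⟨h1, h2⟩⟩
    · exact ⟨0, fun h => absurd h hz⟩
  choose g hg using hchoice
  set L := 𝓝[N] x with hL
  set S : Set (WeakDual ℝ Y) := K r \ W with hS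
  have hScomp : IsCompact S := (K_compact hr.le).diff hW
  have hmem : S ∈ Filter.map g L := by
    rw [Filter.mem_map]
    have h1 : N ∩ ball x δ ∈ L := by
      exact Filter.inter_mem self_mem_nhdsWithin (nhdsWithin_le_nhds (ball_mem_nhds x hδ))
    refine Filter.mem_of_superset h1 fun z hz => ?_
    obtain ⟨h2, h3⟩ := hg z hz.1
    exact ⟨hbd z hz.2 h2, h3⟩
  obtain ⟨φ, hφS, hφcl⟩ := hScomp (Filter.le_principal_iff.mpr hmem)
  -- φ is a subgradient at x
  have hφsub : φ ∈ Subdiff f x := by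
    intro y
    by_contra hy
    push_neg at hy
    set ε : ℝ := (f x + φ (y - x) - f y) / (r + 3) with hε
    have hεpos : 0 < ε := by
      apply div_pos (by linarith) (by linarith)
    have hU : {ψ : WeakDual ℝ Y | |ψ (y - x) - φ (y - x)| < ε} ∈ 𝓝 φ := by
      have : IsOpen {ψ : WeakDual ℝ Y | |ψ (y - x) - φ (y - x)| < ε} := by
        have hcont : Continuous fun ψ : WeakDual ℝ Y => |ψ (y - x) - φ (y - x)| :=
          ((WeakDual.eval_continuous (y - x)).sub continuous_const).abs
        exact isOpen_lt hcont continuous_const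
      exact this.mem_nhds (by simp [hεpos])
    have hV : (N ∩ ball x (min δ ε) ∩ {z | |f z - f x| < ε}) ∈ L := by
      refine Filter.inter_mem (Filter.inter_mem self_mem_nhdsWithin ?_) ?_
      · exact nhdsWithin_le_nhds (ball_mem_nhds x (lt_min hδ hεpos))
      · apply nhdsWithin_le_nhds
        have : Continuous fun z => |f z - f x| := (hf.sub continuous_const).abs
        have h0 : |f x - f x| < ε := by simpa using hεpos
        exact (isOpen_lt this continuous_const).mem_nhds h0
    rw [clusterPt_iff_nonempty] at hφcl
    obtain ⟨ψ, hψU, hψV⟩ := hφcl hU (Filter.image_mem_map hV)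
    obtain ⟨z, ⟨⟨hzN, hzball⟩, hzf⟩, rfl⟩ := hψV
    obtain ⟨hgz, -⟩ := hg z hzN
    have hzδ : z ∈ ball x δ := mem_ball.mpr (lt_of_lt_of_le (mem_ball.mp hzball) (min_le_left _ _))
    have hzε : dist z x < ε := lt_of_lt_of_le (mem_ball.mp hzball) (min_le_right _ _)
    have hKz : g z ∈ K r := hbd z hzδ hgz
    -- subgradient inequality at z
    have h1 : f z + (g z) (y - z) ≤ f y := hgz y
    have h2 : (g z) (y - z) = (g z) (y - x) + (g z) (x - z) := by
      rw [← map_add]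
      congr 1
      abel
    have h3 : |(g z) (x - z)| ≤ r * ‖x - z‖ := hKz (x - z)
    have h4 : ‖x - z‖ < ε := by rwa [← dist_eq_norm, dist_comm]
    have h5 : |(g z) (y - x) - φ (y - x)| < ε := hψU
    rw [abs_le] at h3
    rw [abs_lt] at h5
    rw [mem_setOf_eq, abs_lt] at hzf
    have h6 : r * ‖x - z‖ ≤ r * ε := by nlinarith [norm_nonneg (x - z)]
    have : f x + φ (y - x) - (r + 3) * ε ≤ f y := by
      rw [h2] at h1
      nlinarith [norm_nonneg (x - z)]
    rw [hε] at this
    have h7 : (r + 3) * ((f x + φ (y - x) - f y) / (r + 3)) = f x + φ (y - x) - f y := by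
      field_simp
    rw [h7] at this
    linarith
  exact hφS.2 (hsub hφsub)

/-- section of a graph -/
def Sect (G : Set (Y × WeakDual ℝ Y)) (x : Y) : Set (WeakDual ℝ Y) := {φ | (x, φ) ∈ G}

/-- an usco contained in the subdifferential, described by its graph -/
def GoodGraph (f : Y → ℝ) (G : Set (Y × WeakDual ℝ Y)) : Prop :=
  (∀ x, (Sect G x).Nonempty) ∧ (∀ x, IsCompact (Sect G x)) ∧
  (∀ x, ∀ W : Set (WeakDual ℝ Y), IsOpen W → Sect G x ⊆ W → ∀ᶠ z in 𝓝 x, Sect G z ⊆ W) ∧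
  (∀ x, Sect G x ⊆ Subdiff f x)

theorem subdiff_compact {f : Y → ℝ} (hf : Continuous f) (x : Y) : IsCompact (Subdiff f x) := by
  obtain ⟨δ, hδ, r, hr, hbd⟩ := subdiff_localbound hf x
  exact (K_compact hr.le).of_isClosed_subset (subdiff_closed f x)
    (hbd x (mem_ball_self hδ))

theorem goodGraph_subdiff {f : Y → ℝ} (hf : Continuous f) (hc : ConvexOn ℝ Set.univ f) :
    GoodGraph f {p : Y × WeakDual ℝ Y | p.2 ∈ Subdiff f p.1} := by
  have hsect : ∀ x, Sect {p : Y × WeakDual ℝ Y | p.2 ∈ Subdiff f p.1} x = Subdiff f x :=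
    fun x => rfl
  refine ⟨fun x => ?_, fun x => ?_, fun x W hW hsub => ?_, fun x => ?_⟩
  · rw [hsect]; exact subdiff_nonempty hf hc x
  · rw [hsect]; exact subdiff_compact hf x
  · rw [hsect] at hsub
    filter_upwards [subdiff_usc hf x hW hsub] with z hz
    rw [hsect]; exact hz
  · rw [hsect]

theorem exists_minimal_usco {f : Y → ℝ} (hf : Continuous f) (hc : ConvexOn ℝ Set.univ f) :
    ∃ G : Set (Y × WeakDual ℝ Y), GoodGraph f G ∧
      ∀ G', GoodGraph f G' → G' ⊆ G → G' = G := by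
  have hzorn : ∀ c ⊆ {G : Set (Y × WeakDual ℝ Y) | GoodGraph f G}, IsChain (· ⊆ ·) c →
      ∃ lb ∈ {G | GoodGraph f G}, ∀ s ∈ c, lb ⊆ s := by
    rintro c hcS hchain
    rcases c.eq_empty_or_nonempty with rfl | hcne
    · exact ⟨{p : Y × WeakDual ℝ Y | p.2 ∈ Subdiff f p.1}, goodGraph_subdiff hf hc,
       fun s hs => absurd hs (notMem_empty s)⟩
    have hccs : Nonempty c := hcne.to_subtype
    -- sections of members
    have hGG : ∀ G ∈ c, GoodGraph f G := fun G hG => hcS hG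
    have hsect : ∀ x, Sect (⋂₀ c) x = ⋂ G : c, Sect (G : Set (Y × WeakDual ℝ Y)) x := by
      intro x; ext φ
      simp [Sect, mem_sInter, mem_iInter]
    have hdir : ∀ G1 G2 : c, ∃ G3 : c,
        (∀ x, Sect (G3 : Set (Y × WeakDual ℝ Y)) x ⊆ Sect (G1 : Set (Y × WeakDual ℝ Y)) x) ∧
        (∀ x, Sect (G3 : Set (Y × WeakDual ℝ Y)) x ⊆ Sect (G2 : Set (Y × WeakDual ℝ Y)) x) := by
      rintro ⟨G1, h1⟩ ⟨G2, h2⟩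
      rcases eq_or_ne G1 G2 with rfl | hne
      · exact ⟨⟨G1, h1⟩, fun x φ hφ => hφ, fun x φ hφ => hφ⟩
      rcases hchain h1 h2 hne with h | h
      · exact ⟨⟨G1, h1⟩, fun x φ hφ => hφ, fun x φ hφ => h hφ⟩
      · exact ⟨⟨G2, h2⟩, fun x φ hφ => h hφ, fun x φ hφ => hφ⟩
    have hdirx : ∀ x, Directed (· ⊇ ·) (fun G : c => Sect (G : Set (Y × WeakDual ℝ Y)) x) := by
      intro x G1 G2
      obtain ⟨G3, h1, h2⟩ := hdir G1 G2
      exact ⟨G3, h1 x, h2 x⟩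
    refine ⟨⋂₀ c, ⟨fun x => ?_, fun x => ?_, fun x W hW hsub => ?_, fun x => ?_⟩,
      fun G hG => sInter_subset_of_mem hG⟩
    · rw [hsect]
      exact IsCompact.nonempty_iInter_of_directed_nonempty_isCompact_isClosed _
        (hdirx x) (fun G => (hGG G G.2).1 x) (fun G => (hGG G G.2).2.1 x)
        (fun G => ((hGG G G.2).2.1 x).isClosed)
    · rw [hsect]
      obtain ⟨G0⟩ := id hccs
      exact ((hGG G0 G0.2).2.1 x).of_isClosed_subset
        (isClosed_iInter fun G => ((hGG G G.2).2.1 x).isClosed) (iInter_subset _ G0)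
    · rw [hsect] at hsub
      obtain ⟨G0⟩ := id hccs
      -- find a single member whose section is inside W
      have hempty : (Sect (G0 : Set (Y × WeakDual ℝ Y)) x ∩
          ⋂ G : c, (Sect (G : Set (Y × WeakDual ℝ Y)) x \ W)) = ∅ := by
        rw [eq_empty_iff_forall_notMem]
        rintro φ ⟨h0, hmem⟩
        rw [mem_iInter] at hmem
        have : φ ∈ ⋂ G : c, Sect (G : Set (Y × WeakDual ℝ Y)) x :=
          mem_iInter.mpr fun G => (hmem G).1
        exact (hmem G0).2 (hsub this)
      obtain ⟨G1, hG1⟩ := ((hGG G0 G0.2).2.1 x).elim_directed_family_closed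
        (fun G : c => Sect (G : Set (Y × WeakDual ℝ Y)) x \ W)
        (fun G => (((hGG G G.2).2.1 x).isClosed).sdiff hW) hempty
        (by
          intro G1 G2
          obtain ⟨G3, h1, h2⟩ := hdirx x G1 G2
          exact ⟨G3, fun φ hφ => ⟨h1 hφ.1, hφ.2⟩, fun φ hφ => ⟨h2 hφ.1, hφ.2⟩⟩)
      obtain ⟨G2, h20, h21⟩ := hdir G0 G1
      have hG2sub : Sect (G2 : Set (Y × WeakDual ℝ Y)) x ⊆ W := by
        intro φ hφ
        by_contra hφW
        rw [eq_empty_iff_forall_notMem] at hG1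
        exact hG1 φ ⟨h20 x hφ, h21 x hφ, hφW⟩
      filter_upwards [(hGG G2 G2.2).2.2.1 x W hW hG2sub] with z hz
      rw [hsect]
      exact fun φ hφ => hz (mem_iInter.mp hφ G2)
    · rw [hsect]
      obtain ⟨G0⟩ := id hccs
      exact fun φ hφ => (hGG G0 G0.2).2.2.2 x (mem_iInter.mp hφ G0)

  obtain ⟨m, hm, hmin⟩ := zorn_superset {G | GoodGraph f G} hzorn
  exact ⟨m, hm, fun G' hG' hsub => le_antisymm hsub (hmin hG' hsub)⟩

theorem minimal_usco_open_small {f : Y → ℝ} {G : Set (Y × WeakDual ℝ Y)}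
    (hG : GoodGraph f G) (hmin : ∀ G', GoodGraph f G' → G' ⊆ G → G' = G)
    {O : Set Y} (hO : IsOpen O) {W : Set (WeakDual ℝ Y)} (hW : IsOpen W)
    {x₀ : Y} (hx₀ : x₀ ∈ O) (hne : (Sect G x₀ ∩ W).Nonempty) :
    ∃ V : Set Y, IsOpen V ∧ V.Nonempty ∧ V ⊆ O ∧ ∀ z ∈ V, Sect G z ⊆ W := by
  set T : Set Y := {y | y ∈ O ∧ Sect G y ⊆ W} with hT
  rcases T.eq_empty_or_nonempty with hTe | hTne
  · -- build a strictly smaller good graph, contradiction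
    exfalso
    set G' : Set (Y × WeakDual ℝ Y) := {p ∈ G | p.1 ∈ O → p.2 ∉ W} with hG'
    have hsub : G' ⊆ G := fun p hp => hp.1
    have hsect_in : ∀ y ∈ O, Sect G' y = Sect G y \ W := by
      intro y hy
      ext φ
      simp only [Sect, hG', mem_setOf_eq, mem_sep_iff, mem_diff]
      exact ⟨fun ⟨h1, h2⟩ => ⟨h1, h2 hy⟩, fun ⟨h1, h2⟩ => ⟨h1, fun _ => h2⟩⟩
    have hsect_out : ∀ y, y ∉ O → Sect G' y = Sect G y := by
      intro y hy
      ext φ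
      simp only [Sect, hG', mem_setOf_eq, mem_sep_iff]
      exact ⟨fun ⟨h1, _⟩ => h1, fun h1 => ⟨h1, fun h => absurd h hy⟩⟩
    have hGsubW : ∀ y ∈ O, ¬ Sect G y ⊆ W := by
      intro y hy hcon
      rw [eq_empty_iff_forall_notMem] at hTe
      exact hTe y ⟨hy, hcon⟩
    have hgood : GoodGraph f G' := by
      refine ⟨fun y => ?_, fun y => ?_, fun y V hV hsubV => ?_, fun y => ?_⟩
      · by_cases hy : y ∈ O
        · rw [hsect_in y hy]
          rw [Set.diff_nonempty]
          exact hGsubW y hy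
        · rw [hsect_out y hy]; exact hG.1 y
      · by_cases hy : y ∈ O
        · rw [hsect_in y hy]; exact (hG.2.1 y).diff hW
        · rw [hsect_out y hy]; exact hG.2.1 y
      · by_cases hy : y ∈ O
        · rw [hsect_in y hy] at hsubV
          have h1 : Sect G y ⊆ V ∪ W := by
            intro φ hφ
            by_cases hφW : φ ∈ W
            · exact Or.inr hφW
            · exact Or.inl (hsubV ⟨hφ, hφW⟩)
          filter_upwards [hG.2.2.1 y (V ∪ W) (hV.union hW) h1, hO.mem_nhds hy] with z hz hzO
          rw [hsect_in z hzO]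
          rintro φ ⟨hφ, hφW⟩
          rcases hz hφ with h | h
          · exact h
          · exact absurd h hφW
        · rw [hsect_out y hy] at hsubV
          filter_upwards [hG.2.2.1 y V hV hsubV] with z hz
          exact fun φ hφ => hz (hsub hφ)
      · exact fun φ hφ => hG.2.2.2 y (hsub hφ)
    have := hmin G' hgood hsub
    obtain ⟨φ, hφG, hφW⟩ := hne
    have : (x₀, φ) ∈ G' := this ▸ hφG
    exact (this.2 hx₀) hφW
  · -- T is a suitable open set
    refine ⟨T, ?_, hTne, fun y hy => hy.1, fun z hz => hz.2⟩
    rw [isOpen_iff_mem_nhds]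
    rintro y ⟨hyO, hyW⟩
    filter_upwards [hG.2.2.1 y W hW hyW, hO.mem_nhds hyO] with z h1 h2
    exact ⟨h2, h1⟩

/-- region where the subdifferential is bounded by `k+1` -/
def Om (f : Y → ℝ) (k : ℕ) : Set Y :=
  {x | ∃ δ > (0:ℝ), ∀ z ∈ ball x δ, Subdiff f z ⊆ K ((k:ℝ)+1)}

theorem Om_open (f : Y → ℝ) (k : ℕ) : IsOpen (Om f k) := by
  rw [isOpen_iff_mem_nhds]
  rintro x ⟨δ, hδ, hx⟩
  rw [Metric.mem_nhds_iff]
  refine ⟨δ/2, by linarith, fun x' hx' => ⟨δ/2, by linarith, fun z hz => hx z ?_⟩⟩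
  rw [mem_ball] at *
  calc dist z x ≤ dist z x' + dist x' x := dist_triangle _ _ _
    _ < δ := by linarith

theorem Om_cover {f : Y → ℝ} (hf : Continuous f) (x : Y) : ∃ k : ℕ, x ∈ Om f k := by
  obtain ⟨δ, hδ, r, hr, hbd⟩ := subdiff_localbound hf x
  obtain ⟨k, hk⟩ := exists_nat_ge r
  refine ⟨k, δ, hδ, fun z hz φ hφ y => ?_⟩
  calc |φ y| ≤ r * ‖y‖ := hbd z hz hφ y
    _ ≤ ((k:ℝ)+1) * ‖y‖ := by nlinarith [norm_nonneg y]

/-- the good sets whose intersection is the dense Gδ set -/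
def Gset (ρ : WeakDual ℝ Y → WeakDual ℝ Y → ℝ) (f : Y → ℝ) (G : Set (Y × WeakDual ℝ Y))
    (k n : ℕ) : Set Y :=
  (closure (Om f k))ᶜ ∪ {x | ∃ U : Set Y, IsOpen U ∧ x ∈ U ∧ U ⊆ Om f k ∧
    ∀ φ ∈ ⋃ z ∈ U, Sect G z, ∀ ψ ∈ ⋃ z ∈ U, Sect G z,
      ρ ((((k:ℝ)+1)⁻¹) • φ) ((((k:ℝ)+1)⁻¹) • ψ) < 1/(n+1)}

theorem Gset_open (ρ : WeakDual ℝ Y → WeakDual ℝ Y → ℝ) (f : Y → ℝ)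
    (G : Set (Y × WeakDual ℝ Y)) (k n : ℕ) : IsOpen (Gset ρ f G k n) := by
  refine IsOpen.union (isOpen_compl_iff.mpr isClosed_closure) ?_
  rw [isOpen_iff_mem_nhds]
  rintro x ⟨U, hU, hxU, hUO, hsmall⟩
  exact Filter.mem_of_superset (hU.mem_nhds hxU)
    (fun x' hx' => ⟨U, hU, hx', hUO, hsmall⟩)

theorem Gset_dense
    (ρ : WeakDual ℝ Y → WeakDual ℝ Y → ℝ) (B : Set (WeakDual ℝ Y))
    (hB : B = {φ : WeakDual ℝ Y | ∀ y : Y, |φ y| ≤ ‖y‖})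
    (hfrag : FragmentedBy B ρ)
    {f : Y → ℝ} {G : Set (Y × WeakDual ℝ Y)}
    (hG : GoodGraph f G) (hmin : ∀ G', GoodGraph f G' → G' ⊆ G → G' = G)
    (k n : ℕ) : Dense (Gset ρ f G k n) := by
  rw [dense_iff_inter_open]
  intro O hO hOne
  by_cases hOsub : O ⊆ closure (Om f k)
  · -- O meets Om f k
    obtain ⟨x, hx⟩ := hOne
    have hxcl : x ∈ closure (Om f k) := hOsub hx
    rw [_root_.mem_closure_iff] at hxcl
    obtain ⟨z₀, hz₀O, hz₀Om⟩ := hxcl O hO hx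
    set O' : Set Y := O ∩ Om f k with hO'
    have hO'open : IsOpen O' := hO.inter (Om_open f k)
    have hO'ne : O'.Nonempty := ⟨z₀, hz₀O, hz₀Om⟩
    set c : ℝ := ((k:ℝ)+1)⁻¹ with hcdef
    have hkpos : (0:ℝ) < (k:ℝ)+1 := by positivity
    have hcpos : 0 < c := by rw [hcdef]; positivity
    set A : Set (WeakDual ℝ Y) := ⋃ z ∈ O', Sect G z with hA
    have hAne : A.Nonempty := by
      obtain ⟨z, hz⟩ := hO'ne
      obtain ⟨φ, hφ⟩ := hG.1 z
      exact ⟨φ, mem_biUnion hz hφ⟩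
    have hAK : A ⊆ K ((k:ℝ)+1) := by
      rintro φ hφ
      rw [mem_iUnion₂] at hφ
      obtain ⟨z, hz, hφz⟩ := hφ
      obtain ⟨δ, hδ, hbd⟩ := hz.2
      exact hbd z (mem_ball_self hδ) (hG.2.2.2 z hφz)
    set A' : Set (WeakDual ℝ Y) := (c • ·) '' A with hA'
    have hA'B : A' ⊆ B := by
      rintro _ ⟨φ, hφ, rfl⟩
      rw [hB]
      intro y
      have h1 : (c • φ) y = c * φ y := rfl
      rw [h1, abs_mul, abs_of_pos hcpos]
      have := hAK hφ y
      calc c * |φ y| ≤ c * (((k:ℝ)+1) * ‖y‖) := by nlinarith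
        _ = ‖y‖ := by rw [hcdef]; field_simp
    have hA'ne : A'.Nonempty := hAne.image _
    have hεpos : (0:ℝ) < 1/(n+1) := by positivity
    obtain ⟨U₀, hU₀open, hU₀ne, hU₀small⟩ := hfrag (1/(n+1)) hεpos A' hA'B hA'ne
    set W : Set (WeakDual ℝ Y) := (c • ·) ⁻¹' U₀ with hW
    have hWopen : IsOpen W := hU₀open.preimage (continuous_const_smul c)
    -- some point of O' has a Φ-value in W
    obtain ⟨b, hbU₀, hbA'⟩ := hU₀ne
    obtain ⟨a, haA, rfl⟩ := hbA'
    have haW : a ∈ W := hbU₀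
    rw [hA, mem_iUnion₂] at haA
    obtain ⟨x₀, hx₀O', hax₀⟩ := haA
    obtain ⟨V, hVopen, hVne, hVsub, hVsmall⟩ := minimal_usco_open_small hG hmin hO'open
      hWopen hx₀O' ⟨a, hax₀, haW⟩
    obtain ⟨v, hv⟩ := hVne
    refine ⟨v, hVsub hv |>.1, Or.inr ⟨V, hVopen, hv, fun z hz => (hVsub hz).2, ?_⟩⟩
    intro φ hφ ψ hψ
    rw [mem_iUnion₂] at hφ hψ
    obtain ⟨zφ, hzφ, hφz⟩ := hφ
    obtain ⟨zψ, hzψ, hψz⟩ := hψ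
    have hφW : φ ∈ W := hVsmall zφ hzφ hφz
    have hψW : ψ ∈ W := hVsmall zψ hzψ hψz
    have hφA : φ ∈ A := mem_biUnion (hVsub hzφ) hφz
    have hψA : ψ ∈ A := mem_biUnion (hVsub hzψ) hψz
    exact hU₀small _ ⟨hφW, mem_image_of_mem _ hφA⟩ _ ⟨hψW, mem_image_of_mem _ hψA⟩
  · rw [Set.not_subset] at hOsub
    obtain ⟨x, hxO, hxcl⟩ := hOsub
    exact ⟨x, hxO, Or.inl hxcl⟩

end WAS

/-- `f` is Gâteaux differentiable at `x`. -/
def GateauxDifferentiableAt {Y : Type*} [NormedAddCommGroup Y] [NormedSpace ℝ Y]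
    (f : Y → ℝ) (x : Y) : Prop :=
  ∃ L : Y →L[ℝ] ℝ, ∀ v : Y, HasDerivAt (fun t : ℝ => f (x + t • v)) (L v) 0

/-- A Banach space is weak Asplund if every continuous convex function on it is
Gâteaux differentiable at each point of a dense `Gδ` set. -/
def WeakAsplundSpace (Y : Type) [NormedAddCommGroup Y] [NormedSpace ℝ Y] : Prop :=
  ∀ f : Y → ℝ, Continuous f → ConvexOn ℝ Set.univ f →
    ∃ D : Set Y, Dense D ∧ IsGδ D ∧ ∀ x ∈ D, GateauxDifferentiableAt f x


/-- If the dual unit ball of a Banach space `Y` is fragmentable by some metric in the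
weak* topology, then `Y` is weak Asplund. -/
theorem weakAsplund_of_dual_ball_fragmentable
    (Y : Type) [NormedAddCommGroup Y] [NormedSpace ℝ Y] [CompleteSpace Y]
    (ρ : WeakDual ℝ Y → WeakDual ℝ Y → ℝ)
    (B : Set (WeakDual ℝ Y))
    (hB : B = {φ : WeakDual ℝ Y | ∀ y : Y, |φ y| ≤ ‖y‖})
    (hmetric : IsMetricOn B ρ)
    (hfrag : FragmentedBy B ρ) :
    WeakAsplundSpace Y := by
  intro f hf hconv
  obtain ⟨G, hG, hmin⟩ := WAS.exists_minimal_usco hf hconv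
  set D : Set Y := ⋂ p : ℕ × ℕ, WAS.Gset ρ f G p.1 p.2 with hD
  have hDd : Dense D := dense_iInter_of_isOpen (fun p => WAS.Gset_open ρ f G p.1 p.2)
    (fun p => WAS.Gset_dense ρ B hB hfrag hG hmin p.1 p.2)
  have hDGδ : IsGδ D := IsGδ.iInter_of_isOpen (fun p => WAS.Gset_open ρ f G p.1 p.2)
  refine ⟨D, hDd, hDGδ, fun x hx => ?_⟩
  obtain ⟨k, hk⟩ := WAS.Om_cover hf x
  have hxcl : x ∈ closure (WAS.Om f k) := subset_closure hk
  set c : ℝ := ((k:ℝ)+1)⁻¹ with hcdef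
  have hkpos : (0:ℝ) < (k:ℝ)+1 := by positivity
  have hcpos : 0 < c := by rw [hcdef]; positivity
  obtain ⟨φ₀, hφ₀⟩ := hG.1 x
  have hSK : WAS.Sect G x ⊆ WAS.K ((k:ℝ)+1) := by
    obtain ⟨δ, hδ, hbd⟩ := hk
    exact fun φ hφ => hbd x (mem_ball_self hδ) (hG.2.2.2 x hφ)
  have hmemB : ∀ φ ∈ WAS.Sect G x, c • φ ∈ B := by
    intro φ hφ
    rw [hB]
    intro y
    have h1 : (c • φ) y = c * φ y := rfl
    rw [h1, abs_mul, abs_of_pos hcpos]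
    have h2 := hSK hφ y
    calc c * |φ y| ≤ c * (((k:ℝ)+1) * ‖y‖) := by nlinarith
      _ = ‖y‖ := by rw [hcdef]; field_simp
  have huniq : ∀ ψ ∈ WAS.Sect G x, ψ = φ₀ := by
    intro ψ hψ
    have key : ∀ n : ℕ, ρ (c • ψ) (c • φ₀) < 1/(n+1) := by
      intro n
      have hx' : x ∈ WAS.Gset ρ f G k n := mem_iInter.mp hx (k, n)
      rcases hx' with h | ⟨U, hUopen, hxU, hUO, hsmall⟩
      · exact absurd hxcl h
      · exact hsmall ψ (mem_biUnion hxU hψ) φ₀ (mem_biUnion hxU hφ₀)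
    have hb1 : c • ψ ∈ B := hmemB ψ hψ
    have hb2 : c • φ₀ ∈ B := hmemB φ₀ hφ₀
    have hρ0 : ρ (c • ψ) (c • φ₀) = 0 := by
      refine le_antisymm ?_ (hmetric.1 _ hb1 _ hb2)
      by_contra h
      push_neg at h
      obtain ⟨n, hn⟩ := exists_nat_one_div_lt h
      exact absurd (key n) (not_lt.mpr (by exact_mod_cast hn.le))
    have := (hmetric.2.1 _ hb1 _ hb2).mp hρ0
    exact smul_right_injective _ (ne_of_gt hcpos) this
  refine ⟨WeakDual.toStrongDual φ₀, fun v => ?_⟩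
  have hLv : (WeakDual.toStrongDual φ₀) v = φ₀ v := rfl
  rw [hLv, hasDerivAt_iff_tendsto_slope, Metric.tendsto_nhdsWithin_nhds]
  intro ε hε
  set Wε : Set (WeakDual ℝ Y) := (fun ψ : WeakDual ℝ Y => ψ v) ⁻¹' (ball (φ₀ v) ε) with hWε
  have hWopen : IsOpen Wε := (isOpen_ball).preimage (WeakDual.eval_continuous v)
  have hsubW : WAS.Sect G x ⊆ Wε := by
    intro ψ hψ
    rw [huniq ψ hψ]
    simp [hWε, hε]
  obtain ⟨δ₀, hδ₀, hev⟩ := Metric.eventually_nhds_iff.mp (hG.2.2.1 x Wε hWopen hsubW)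
  refine ⟨δ₀/(‖v‖+1), by positivity, fun t ht htd => ?_⟩
  have htne : t ≠ 0 := ht
  rw [Real.dist_eq, sub_zero] at htd
  set z : Y := x + t • v with hz
  have hzx : dist z x < δ₀ := by
    rw [hz, dist_eq_norm]
    have h1 : x + t • v - x = t • v := by abel
    rw [h1, norm_smul, Real.norm_eq_abs]
    have h2 : ‖v‖ < ‖v‖ + 1 := by linarith
    calc |t| * ‖v‖ ≤ |t| * (‖v‖+1) := by nlinarith [abs_nonneg t]
      _ < (δ₀/(‖v‖+1)) * (‖v‖+1) := by
          have : (0:ℝ) < ‖v‖+1 := by positivity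
          exact mul_lt_mul_of_pos_right htd this
      _ = δ₀ := by field_simp
  obtain ⟨ψ, hψ⟩ := hG.1 z
  have hψS : ψ ∈ WAS.Subdiff f z := hG.2.2.2 z hψ
  have hψW : |ψ v - φ₀ v| < ε := by
    have := hev hzx hψ
    rw [hWε, mem_preimage, mem_ball, Real.dist_eq] at this
    exact this
  have hφ₀S : φ₀ ∈ WAS.Subdiff f x := hG.2.2.2 x hφ₀
  have h1 : f x + t * φ₀ v ≤ f (x + t • v) := by
    have := hφ₀S (x + t • v)
    have he : x + t • v - x = t • v := by abel
    rwa [he, map_smul, smul_eq_mul] at this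
  have h2 : f (x + t • v) - t * ψ v ≤ f x := by
    have := hψS x
    have he : x - z = -(t • v) := by rw [hz]; abel
    rw [he, map_neg, map_smul, smul_eq_mul] at this
    rw [hz] at *
    linarith
  have hslope : slope (fun t : ℝ => f (x + t • v)) 0 t = (f (x + t • v) - f x) / t := by
    rw [slope_def_field]
    simp
  rw [hslope, Real.dist_eq]
  rw [abs_lt] at hψW ⊢
  rcases lt_or_gt_of_ne htne with htneg | htpos
  · have e1 : (f (x + t • v) - f x) / t ≤ φ₀ v := by
      rw [div_le_iff_of_neg htneg]
      linarith [h1]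
    have e2 : ψ v ≤ (f (x + t • v) - f x) / t := by
      rw [le_div_iff_of_neg htneg]
      linarith [h2]
    constructor <;> linarith
  · have e1 : φ₀ v ≤ (f (x + t • v) - f x) / t := by
      rw [le_div_iff₀ htpos]
      linarith [h1]
    have e2 : (f (x + t • v) - f x) / t ≤ ψ v := by
      rw [div_le_iff₀ htpos]
      linarith [h2]
    constructor <;> linarith
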